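/- Let n ≥ 6 be divisible by 3, and let A = !![a₁,a₂,a₃; b₁,b₂,b₃; c₁,c₂,c₃] be a real 3×3 matrix with D := det A ≠ 0. Let (xᵢ,yᵢ,pᵢ,qᵢ) ∈ ℝ⁴ for i = 1,…,n with hᵢ := c₁xᵢ+c₂yᵢ+c₃ ≠ 0 and Δ₁₂₃ ≠ 0, Δ₁₂₄ ≠ 0, and let (x̃ᵢ,ỹᵢ,p̃ᵢ,q̃ᵢ) be the prolonged transform of the i-th data. Then zₙ := (∏_{i=5}^{n} Δ₁₂ᵢ)·(Δ₁₃₄Δ₂₃₄)^{n/3−1}/(Δ₁₂₃Δ₁₂₄)^{2n/3−3} is a relative invariant of weight −1/3 for the diagonal action on n points: z̃ₙ = ((∏_{i=1}^{n} hᵢ)/D^{n/3}) · zₙ, where z̃ₙ is computed from the transformed data. -/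

import Mathlib

open Matrix

/-- The gradient line `ℓ = (p, q, -p*x - q*y)` of the data `(x, y, p, q)`. -/
noncomputable def gradLine (x y p q : ℝ) : Fin 3 → ℝ := ![p, q, -(p * x) - q * y]

/-- `Δᵢⱼₖ`: the determinant of the 3×3 matrix whose rows are the gradient lines of the
points `i, j, k` of the configuration `(x, y, p, q)`. -/
noncomputable def Delta3 (x y p q : ℕ → ℝ) (i j k : ℕ) : ℝ :=
  Matrix.det (Matrix.of
    ![gradLine (x i) (y i) (p i) (q i),
      gradLine (x j) (y j) (p j) (q j),
      gradLine (x k) (y k) (p k) (q k)])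

lemma gradLine_transform (a1 a2 a3 b1 b2 b3 c1 c2 c3 : ℝ)
    (hD : Matrix.det !![a1, a2, a3; b1, b2, b3; c1, c2, c3] ≠ 0)
    (x y p q : ℝ) (hH : c1 * x + c2 * y + c3 ≠ 0)
    (xt yt pt qt : ℝ)
    (hxt : xt = (a1 * x + a2 * y + a3) / (c1 * x + c2 * y + c3))
    (hyt : yt = (b1 * x + b2 * y + b3) / (c1 * x + c2 * y + c3))
    (hpt : pt = ((c1 * x + c2 * y + c3) •
      Matrix.vecMul (gradLine x y p q) (!![a1, a2, a3; b1, b2, b3; c1, c2, c3])⁻¹) 0)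
    (hqt : qt = ((c1 * x + c2 * y + c3) •
      Matrix.vecMul (gradLine x y p q) (!![a1, a2, a3; b1, b2, b3; c1, c2, c3])⁻¹) 1) :
    gradLine xt yt pt qt = (c1 * x + c2 * y + c3) •
      Matrix.vecMul (gradLine x y p q) (!![a1, a2, a3; b1, b2, b3; c1, c2, c3])⁻¹ := by
  set A : Matrix (Fin 3) (Fin 3) ℝ := !![a1, a2, a3; b1, b2, b3; c1, c2, c3] with hA
  set u : Fin 3 → ℝ := Matrix.vecMul (gradLine x y p q) A⁻¹ with huu
  have hu : Matrix.vecMul u A = gradLine x y p q := by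
    rw [huu, Matrix.vecMul_vecMul, Matrix.nonsing_inv_mul A (isUnit_iff_ne_zero.mpr hD),
      Matrix.vecMul_one]
  have h0 := congrFun hu 0
  have h1 := congrFun hu 1
  have h2 := congrFun hu 2
  simp [Matrix.vecMul, dotProduct, Fin.sum_univ_three, gradLine, hA] at h0 h1 h2
  have hz : u 0 * (a1 * x + a2 * y + a3) + u 1 * (b1 * x + b2 * y + b3)
      + u 2 * (c1 * x + c2 * y + c3) = 0 := by linear_combination x * h0 + y * h1 + h2
  funext j
  fin_cases j
  · simpa [gradLine] using hpt
  · simpa [gradLine] using hqt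
  · show -(pt * xt) - qt * yt = ((c1 * x + c2 * y + c3) • u) 2
    have hpt' : pt = (c1 * x + c2 * y + c3) * u 0 := by simpa [gradLine] using hpt
    have hqt' : qt = (c1 * x + c2 * y + c3) * u 1 := by simpa [gradLine] using hqt
    have : ((c1 * x + c2 * y + c3) • u) 2 = (c1 * x + c2 * y + c3) * u 2 := rfl
    have e1 : (c1*x+c2*y+c3) * u 0 * ((a1 * x + a2 * y + a3) / (c1*x+c2*y+c3))
        = u 0 * (a1 * x + a2 * y + a3) := by field_simp
    have e2 : (c1*x+c2*y+c3) * u 1 * ((b1 * x + b2 * y + b3) / (c1*x+c2*y+c3))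
        = u 1 * (b1 * x + b2 * y + b3) := by field_simp
    rw [this, hpt', hqt', hxt, hyt, e1, e2]
    linear_combination -hz

lemma det_rows_transform (A : Matrix (Fin 3) (Fin 3) ℝ) (hD : Matrix.det A ≠ 0)
    (l1 l2 l3 : Fin 3 → ℝ) (H1 H2 H3 : ℝ) :
    Matrix.det (Matrix.of ![H1 • Matrix.vecMul l1 A⁻¹, H2 • Matrix.vecMul l2 A⁻¹,
        H3 • Matrix.vecMul l3 A⁻¹])
      = (H1 * H2 * H3 / Matrix.det A) * Matrix.det (Matrix.of ![l1, l2, l3]) := by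
  have hmul : Matrix.of ![Matrix.vecMul l1 A⁻¹, Matrix.vecMul l2 A⁻¹, Matrix.vecMul l3 A⁻¹]
      = Matrix.of ![l1, l2, l3] * A⁻¹ := by
    ext i j
    fin_cases i <;>
      simp [Matrix.mul_apply, Matrix.vecMul, dotProduct, Fin.sum_univ_three]
  have hsmul : Matrix.det (Matrix.of ![H1 • Matrix.vecMul l1 A⁻¹, H2 • Matrix.vecMul l2 A⁻¹,
        H3 • Matrix.vecMul l3 A⁻¹])
      = H1 * H2 * H3 * Matrix.det (Matrix.of ![Matrix.vecMul l1 A⁻¹, Matrix.vecMul l2 A⁻¹,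
        Matrix.vecMul l3 A⁻¹]) := by
    simp [Matrix.det_fin_three]
    ring
  rw [hsmul, hmul, Matrix.det_mul, Matrix.det_nonsing_inv, Ring.inverse_eq_inv]
  field_simp

lemma zn_aux (k : ℕ) (h1 h2 h3 h4 D PH PD d134 d234 d123 d124 : ℝ)
    (hh1 : h1 ≠ 0) (hh2 : h2 ≠ 0) (hh3 : h3 ≠ 0) (hh4 : h4 ≠ 0) (hD : D ≠ 0)
    (h123 : d123 ≠ 0) (h124 : d124 ≠ 0) :
    ((h1*h2/D)^(3*k+2) * (PH * PD)) * ((h1*h3*h4/D*d134) * (h2*h3*h4/D*d234))^(k+1) /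
      ((h1*h2*h3/D*d123) * (h1*h2*h4/D*d124))^(2*k+1)
    = (h1*h2*h3*h4*PH / D^(k+2)) * (PD * (d134*d234)^(k+1) / (d123*d124)^(2*k+1)) := by
  simp only [div_eq_mul_inv, mul_pow, inv_pow, mul_inv]
  field_simp
  ring

set_option maxHeartbeats 1600000 in
/-- For `n ≥ 6` divisible by 3, the quantity
`zₙ = (∏_{i=5}^{n} Δ₁₂ᵢ) (Δ₁₃₄Δ₂₃₄)^{n/3−1} / (Δ₁₂₃Δ₁₂₄)^{2n/3−3}` is a relative invariant
of weight `−1/3`: `z̃ₙ = ((∏ᵢ hᵢ) / D^{n/3}) · zₙ`. -/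
theorem zn_relative_invariant_divisible_case (n : ℕ) (hn : 6 ≤ n) (hg : 3 ∣ n)
    (a1 a2 a3 b1 b2 b3 c1 c2 c3 : ℝ)
    (hD : Matrix.det !![a1, a2, a3; b1, b2, b3; c1, c2, c3] ≠ 0)
    (x y p q : ℕ → ℝ)
    (hh : ∀ i ∈ Finset.Icc 1 n, c1 * x i + c2 * y i + c3 ≠ 0)
    (h123 : Delta3 x y p q 1 2 3 ≠ 0)
    (h124 : Delta3 x y p q 1 2 4 ≠ 0)
    (xt yt pt qt : ℕ → ℝ)
    (hxt : ∀ i ∈ Finset.Icc 1 n,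
      xt i = (a1 * x i + a2 * y i + a3) / (c1 * x i + c2 * y i + c3))
    (hyt : ∀ i ∈ Finset.Icc 1 n,
      yt i = (b1 * x i + b2 * y i + b3) / (c1 * x i + c2 * y i + c3))
    (hpt : ∀ i ∈ Finset.Icc 1 n, pt i = ((c1 * x i + c2 * y i + c3) •
      Matrix.vecMul (gradLine (x i) (y i) (p i) (q i))
        (!![a1, a2, a3; b1, b2, b3; c1, c2, c3])⁻¹) 0)
    (hqt : ∀ i ∈ Finset.Icc 1 n, qt i = ((c1 * x i + c2 * y i + c3) •
      Matrix.vecMul (gradLine (x i) (y i) (p i) (q i))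
        (!![a1, a2, a3; b1, b2, b3; c1, c2, c3])⁻¹) 1) :
    (∏ i ∈ Finset.Icc 5 n, Delta3 xt yt pt qt 1 2 i) *
        (Delta3 xt yt pt qt 1 3 4 * Delta3 xt yt pt qt 2 3 4) ^ (n / 3 - 1) /
        (Delta3 xt yt pt qt 1 2 3 * Delta3 xt yt pt qt 1 2 4) ^ (2 * n / 3 - 3)
      = ((∏ i ∈ Finset.Icc 1 n, (c1 * x i + c2 * y i + c3)) /
            Matrix.det !![a1, a2, a3; b1, b2, b3; c1, c2, c3] ^ (n / 3)) *
        ((∏ i ∈ Finset.Icc 5 n, Delta3 x y p q 1 2 i) *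
          (Delta3 x y p q 1 3 4 * Delta3 x y p q 2 3 4) ^ (n / 3 - 1) /
          (Delta3 x y p q 1 2 3 * Delta3 x y p q 1 2 4) ^ (2 * n / 3 - 3)) := by
  have key : ∀ i ∈ Finset.Icc 1 n, ∀ j ∈ Finset.Icc 1 n, ∀ k ∈ Finset.Icc 1 n,
      Delta3 xt yt pt qt i j k
        = ((c1 * x i + c2 * y i + c3) * (c1 * x j + c2 * y j + c3) * (c1 * x k + c2 * y k + c3)
            / Matrix.det !![a1, a2, a3; b1, b2, b3; c1, c2, c3]) * Delta3 x y p q i j k := by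
    intro i hi j hj k hk
    unfold Delta3
    rw [gradLine_transform a1 a2 a3 b1 b2 b3 c1 c2 c3 hD _ _ _ _ (hh i hi) _ _ _ _
          (hxt i hi) (hyt i hi) (hpt i hi) (hqt i hi),
        gradLine_transform a1 a2 a3 b1 b2 b3 c1 c2 c3 hD _ _ _ _ (hh j hj) _ _ _ _
          (hxt j hj) (hyt j hj) (hpt j hj) (hqt j hj),
        gradLine_transform a1 a2 a3 b1 b2 b3 c1 c2 c3 hD _ _ _ _ (hh k hk) _ _ _ _
          (hxt k hk) (hyt k hk) (hpt k hk) (hqt k hk),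
        det_rows_transform _ hD]
  obtain ⟨m, rfl⟩ := hg
  obtain ⟨k, rfl⟩ : ∃ k, m = k + 2 := ⟨m - 2, by omega⟩
  have h1m : (1 : ℕ) ∈ Finset.Icc 1 (3 * (k + 2)) := Finset.mem_Icc.mpr (by omega)
  have h2m : (2 : ℕ) ∈ Finset.Icc 1 (3 * (k + 2)) := Finset.mem_Icc.mpr (by omega)
  have h3m : (3 : ℕ) ∈ Finset.Icc 1 (3 * (k + 2)) := Finset.mem_Icc.mpr (by omega)
  have h4m : (4 : ℕ) ∈ Finset.Icc 1 (3 * (k + 2)) := Finset.mem_Icc.mpr (by omega)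
  have E1 : 3 * (k + 2) / 3 = k + 2 := by omega
  have E2 : 3 * (k + 2) / 3 - 1 = k + 1 := by omega
  have E3 : 2 * (3 * (k + 2)) / 3 - 3 = 2 * k + 1 := by omega
  have hprod : ∏ i ∈ Finset.Icc 5 (3 * (k + 2)), Delta3 xt yt pt qt 1 2 i
      = ((c1 * x 1 + c2 * y 1 + c3) * (c1 * x 2 + c2 * y 2 + c3)
            / Matrix.det !![a1, a2, a3; b1, b2, b3; c1, c2, c3]) ^ (3 * k + 2) *
        ((∏ i ∈ Finset.Icc 5 (3 * (k + 2)), (c1 * x i + c2 * y i + c3)) *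
          ∏ i ∈ Finset.Icc 5 (3 * (k + 2)), Delta3 x y p q 1 2 i) := by
    have step : ∀ i ∈ Finset.Icc 5 (3 * (k + 2)),
        Delta3 xt yt pt qt 1 2 i
          = ((c1 * x 1 + c2 * y 1 + c3) * (c1 * x 2 + c2 * y 2 + c3)
              / Matrix.det !![a1, a2, a3; b1, b2, b3; c1, c2, c3]) *
            ((c1 * x i + c2 * y i + c3) * Delta3 x y p q 1 2 i) := by
      intro i hi
      have him : i ∈ Finset.Icc 1 (3 * (k + 2)) := by
        simp only [Finset.mem_Icc] at hi ⊢; omega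
      rw [key 1 h1m 2 h2m i him]; ring
    rw [Finset.prod_congr rfl step, Finset.prod_mul_distrib, Finset.prod_const,
      Finset.prod_mul_distrib]
    have hcard : (Finset.Icc 5 (3 * (k + 2))).card = 3 * k + 2 := by
      rw [Nat.card_Icc]; omega
    rw [hcard]
  have hsplit : ∏ i ∈ Finset.Icc 1 (3 * (k + 2)), (c1 * x i + c2 * y i + c3)
      = (c1 * x 1 + c2 * y 1 + c3) * (c1 * x 2 + c2 * y 2 + c3) * (c1 * x 3 + c2 * y 3 + c3)
          * (c1 * x 4 + c2 * y 4 + c3)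
          * ∏ i ∈ Finset.Icc 5 (3 * (k + 2)), (c1 * x i + c2 * y i + c3) := by
    have hset : Finset.Icc 1 (3 * (k + 2))
        = insert 1 (insert 2 (insert 3 (insert 4 (Finset.Icc 5 (3 * (k + 2)))))) := by
      ext i; simp [Finset.mem_Icc]; omega
    rw [hset, Finset.prod_insert (by simp [Finset.mem_Icc]),
      Finset.prod_insert (by simp [Finset.mem_Icc]),
      Finset.prod_insert (by simp [Finset.mem_Icc]),
      Finset.prod_insert (by simp [Finset.mem_Icc])]
    ring
  rw [E2, E3, E1, hprod, hsplit,
    key 1 h1m 3 h3m 4 h4m, key 2 h2m 3 h3m 4 h4m, key 1 h1m 2 h2m 3 h3m,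
    key 1 h1m 2 h2m 4 h4m]
  exact zn_aux k _ _ _ _ _ _ _ _ _ _ _ (hh 1 h1m) (hh 2 h2m) (hh 3 h3m) (hh 4 h4m)
    hD h123 h124
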